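/- Every continuous group homomorphism φ : ℂˣ → ℂˣ is of the form φ(z) = |z|^(a+b) · (z/|z|)^(a−b) for unique complex numbers a, b with a − b ∈ ℤ. Conversely, for any a, b ∈ ℂ with a − b ∈ ℤ, the map z ↦ |z|^(a+b) · (z/|z|)^(a−b) is a continuous group homomorphism ℂˣ → ℂˣ. -/

import Mathlib

/-- The "z^a · z̄^b" character of ℂˣ: `|z|^(a+b) · (z/|z|)^(a-b)`, where the
first power is a complex power of the positive real `|z|` and the second is the
integer power `n = a - b` of the unit complex number `z/|z|`. -/
noncomputable def charForm (a b : ℂ) (n : ℤ) (z : ℂ) : ℂ :=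
  ((‖z‖ : ℂ)) ^ (a + b) * (z / (‖z‖ : ℂ)) ^ n

open Complex intervalIntegral

/-- Any continuous homomorphism from `(ℝ, +)` to `(ℂ, *)` is `t ↦ exp (c t)`. -/
private lemma lemA (f : ℝ → ℂ) (hc : Continuous f) (h0 : f 0 = 1)
    (hm : ∀ s t : ℝ, f (s + t) = f s * f t) :
    ∃ c : ℂ, ∀ t : ℝ, f t = Complex.exp (c * t) := by
  obtain ⟨δ, hδ, hδ'⟩ := Metric.continuousAt_iff.mp (hc.continuousAt (x := 0)) (1/2) (by norm_num)
  set t₀ : ℝ := δ / 2 with ht₀def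
  have ht₀ : 0 < t₀ := by positivity
  have hsmall : ∀ s : ℝ, |s| ≤ t₀ → ‖f s - 1‖ ≤ 1/2 := by
    intro s hs
    have : dist s 0 < δ := by
      rw [Real.dist_eq, sub_zero]
      linarith
    have := hδ' this
    rw [dist_eq_norm, h0] at this
    linarith
  have hInt : ∀ a b : ℝ, IntervalIntegrable f MeasureTheory.volume a b :=
    fun a b => hc.intervalIntegrable a b
  set F : ℝ → ℂ := fun u => ∫ s in (0:ℝ)..u, f s with hF
  have hFne : F t₀ ≠ 0 := by
    have hsub : F t₀ - (t₀ : ℂ) = ∫ s in (0:ℝ)..t₀, (f s - 1) := by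
      rw [intervalIntegral.integral_sub (hInt 0 t₀) (intervalIntegrable_const)]
      simp [hF, sub_zero, Complex.real_smul]
    have hbound : ‖F t₀ - (t₀ : ℂ)‖ ≤ 1/2 * |t₀ - 0| := by
      rw [hsub]
      refine intervalIntegral.norm_integral_le_of_norm_le_const ?_
      intro x hx
      rw [Set.uIoc_of_le (le_of_lt ht₀)] at hx
      exact hsmall x (by rw [abs_of_pos hx.1]; exact hx.2)
    intro h
    rw [h, zero_sub, norm_neg, Complex.norm_real, Real.norm_eq_abs,
      abs_of_pos ht₀] at hbound
    rw [sub_zero, abs_of_pos ht₀] at hbound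
    linarith
  have hkey : ∀ t : ℝ, F (t + t₀) - F t = f t * F t₀ := by
    intro t
    have h1 : F t + (∫ s in t..(t + t₀), f s) = F (t + t₀) :=
      intervalIntegral.integral_add_adjacent_intervals (hInt 0 t) (hInt t (t + t₀))
    have h2 : (∫ s in t..(t + t₀), f s) = ∫ s in (0:ℝ)..t₀, f (t + s) := by
      rw [intervalIntegral.integral_comp_add_left f t, add_zero]
    have h3 : (∫ s in (0:ℝ)..t₀, f (t + s)) = f t * F t₀ := by
      rw [hF]
      rw [← intervalIntegral.integral_const_mul]
      exact intervalIntegral.integral_congr (fun s _ => hm t s)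
    rw [← h1, h2, h3]; ring
  have hFderiv : ∀ t : ℝ, HasDerivAt F (f t) t := by
    intro t
    exact intervalIntegral.integral_hasDerivAt_right (hInt 0 t)
      (hc.stronglyMeasurableAtFilter _ _) hc.continuousAt
  set c : ℂ := (f t₀ - 1) / F t₀ with hcdef
  have hfderiv : ∀ t : ℝ, HasDerivAt f (c * f t) t := by
    intro t
    have hfun : f = fun t => (F (t + t₀) - F t) / F t₀ := by
      funext t
      rw [hkey t, mul_div_assoc, div_self hFne, mul_one]
    have hd1 : HasDerivAt (fun t : ℝ => F (t + t₀)) (f (t + t₀)) t :=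
      HasDerivAt.comp_add_const t t₀ (hFderiv (t + t₀))
    have hd : HasDerivAt (fun t : ℝ => (F (t + t₀) - F t) / F t₀)
        ((f (t + t₀) - f t) / F t₀) t := (hd1.sub (hFderiv t)).div_const _
    rw [← hfun] at hd
    convert hd using 1
    rw [hm t t₀, hcdef]
    field_simp
  refine ⟨c, fun t => ?_⟩
  have hg : ∀ t : ℝ, HasDerivAt (fun t : ℝ => f t * Complex.exp (-(c * t))) 0 t := by
    intro t
    have hinner : HasDerivAt (fun t : ℝ => -(c * (t : ℂ))) (-c) t := by
      have h1 : HasDerivAt (fun t : ℝ => (t : ℂ)) 1 t := Complex.ofRealCLM.hasDerivAt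
      have h2 := (h1.const_mul c).neg; rw [mul_one] at h2; exact h2
    have hexp := hinner.cexp
    have := (hfderiv t).mul hexp
    convert this using 1
    exacts [rfl, rfl, by ring]
  have hconst : (fun t : ℝ => f t * Complex.exp (-(c * t))) t
      = (fun t : ℝ => f t * Complex.exp (-(c * t))) 0 :=
    is_const_of_deriv_eq_zero (fun x => (hg x).differentiableAt)
      (fun x => (hg x).deriv) t 0
  simp only [Complex.ofReal_zero, mul_zero, neg_zero, Complex.exp_zero, mul_one, h0] at hconst
  have := congrArg (· * Complex.exp (c * t)) hconst
  simpa [mul_assoc, ← Complex.exp_add] using this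

private lemma lemZero (d : ℂ) (h : ∀ t : ℝ, Complex.exp (d * t) = 1) : d = 0 := by
  by_contra hd
  have habs' : 0 < ‖d‖ := by
    simpa using hd
  set t : ℝ := Real.pi / ‖d‖ with ht
  have ht0 : 0 < t := by positivity
  obtain ⟨k, hk⟩ := Complex.exp_eq_one_iff.mp (h t)
  rcases eq_or_ne k 0 with h0 | h0
  · rw [h0] at hk
    simp only [Int.cast_zero, zero_mul, mul_eq_zero] at hk
    rcases hk with h' | h'
    · exact hd h'
    · rw [Complex.ofReal_eq_zero] at h'; linarith
  · have habs2 : ‖d * t‖ = ‖(k : ℂ) * (2 * Real.pi * Complex.I)‖ := by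
      rw [hk]
    have h2 : ‖d‖ * t = |(k : ℝ)| * (2 * Real.pi) := by
      simpa [norm_mul, Complex.norm_real, Real.norm_eq_abs, abs_of_pos ht0, abs_of_pos Real.pi_pos,
        Complex.norm_intCast] using habs2
    have h3 : ‖d‖ * t = Real.pi := by rw [ht]; field_simp
    have h4 : (1 : ℝ) ≤ |(k : ℝ)| := by
      rw [← Int.cast_abs]
      exact_mod_cast Int.one_le_abs h0
    nlinarith [Real.pi_pos]

/-- `exp` as a map `ℂ → ℂˣ`. -/
private noncomputable def expUnit (w : ℂ) : ℂˣ :=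
  Units.mk0 (Complex.exp w) (Complex.exp_ne_zero w)

private lemma expUnit_add (w w' : ℂ) : expUnit (w + w') = expUnit w * expUnit w' := by
  ext
  simp [expUnit, Complex.exp_add]

/-- charForm evaluated at a nonzero complex number, in exponential coordinates. -/
private lemma charForm_eq_exp (a b : ℂ) (n : ℤ) (z : ℂ) (hz : z ≠ 0) :
    charForm a b n z
      = Complex.exp ((a + b) * Real.log (‖z‖))
        * Complex.exp ((n : ℂ) * ((Complex.arg z : ℂ) * Complex.I)) := by
  have habs : ‖z‖ ≠ 0 := by simpa using hz
  have habsC : ((‖z‖ : ℝ) : ℂ) ≠ 0 := by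
    exact_mod_cast habs
  have h1 : ((‖z‖ : ℝ) : ℂ) ^ (a + b)
      = Complex.exp ((a + b) * Real.log (‖z‖)) := by
    rw [Complex.cpow_def_of_ne_zero habsC, ← Complex.ofReal_log (norm_nonneg z),
      mul_comm]
  have h2 : z / (‖z‖ : ℂ) = Complex.exp ((Complex.arg z : ℂ) * Complex.I) := by
    rw [div_eq_iff habsC, mul_comm]
    exact (Complex.norm_mul_exp_arg_mul_I z).symm
  rw [charForm, h1, h2, ← Complex.exp_int_mul]


private lemma continuous_expUnit_comp {g : ℝ → ℂ} (hg : Continuous g) :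
    Continuous fun t => expUnit (g t) := by
  rw [Units.continuous_iff]
  constructor
  · exact Complex.continuous_exp.comp hg
  · have : (fun t => (((expUnit (g t))⁻¹ : ℂˣ) : ℂ)) = fun t => Complex.exp (-(g t)) := by
      funext t
      simp [expUnit, ← Complex.exp_neg]
    rw [this]
    exact Complex.continuous_exp.comp hg.neg

private lemma expUnit_zero : expUnit 0 = 1 := by
  ext; simp [expUnit]

/-- Representation of a continuous homomorphism `ℂˣ → ℂˣ`. -/
private lemma exists_rep (φ : ℂˣ →* ℂˣ) (hφ : Continuous (fun z : ℂˣ => (φ z : ℂ))) :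
    ∃ (c₁ : ℂ) (n : ℤ), ∀ z : ℂˣ,
      (φ z : ℂ) = Complex.exp (c₁ * Real.log (‖(z : ℂ)‖))
        * Complex.exp ((n : ℂ) * ((Complex.arg (z : ℂ) : ℂ) * Complex.I)) := by
  -- the two one-parameter subgroups
  have key : ∀ g : ℝ → ℂ, Continuous g → g 0 = 0 → (∀ s t, g (s + t) = g s + g t) →
      ∃ c : ℂ, ∀ t : ℝ, (φ (expUnit (g t)) : ℂ) = Complex.exp (c * t) := by
    intro g hg hg0 hgadd
    apply lemA
    · exact hφ.comp (continuous_expUnit_comp hg)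
    · rw [hg0, expUnit_zero, map_one, Units.val_one]
    · intro s t
      rw [hgadd, expUnit_add, map_mul, Units.val_mul]
  obtain ⟨c₁, hc₁⟩ := key (fun t => (t : ℂ)) Complex.continuous_ofReal (by simp) (by push_cast; simp)
  obtain ⟨c₂, hc₂⟩ := key (fun t => (t : ℂ) * Complex.I)
    (Complex.continuous_ofReal.mul continuous_const) (by simp)
    (by intro s t; push_cast; ring)
  -- c₂ is i times an integer
  have hper : expUnit ((2 * Real.pi : ℝ) * Complex.I) = 1 := by
    ext
    simp only [expUnit, Units.val_mk0, Units.val_one]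
    rw [show ((2 * Real.pi : ℝ) : ℂ) * Complex.I = 2 * (Real.pi : ℂ) * Complex.I by push_cast; ring]
    exact Complex.exp_two_pi_mul_I
  have h2π := hc₂ (2 * Real.pi)
  rw [hper, map_one, Units.val_one] at h2π
  obtain ⟨k, hk⟩ := Complex.exp_eq_one_iff.mp h2π.symm
  have hπ : ((2 * Real.pi : ℝ) : ℂ) ≠ 0 := by
    simp [Real.pi_ne_zero]
  have hc₂k : c₂ = (k : ℂ) * Complex.I := by
    have : c₂ * ((2 * Real.pi : ℝ) : ℂ) = ((k : ℂ) * Complex.I) * ((2 * Real.pi : ℝ) : ℂ) := by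
      rw [hk]; push_cast; ring
    exact mul_right_cancel₀ hπ this
  refine ⟨c₁, k, fun z => ?_⟩
  have hz : (z : ℂ) ≠ 0 := Units.ne_zero z
  -- z = expUnit (log z) split into modulus and argument parts
  have hsplit : z = expUnit ((Real.log (‖(z : ℂ)‖) : ℂ))
      * expUnit ((Complex.arg (z : ℂ) : ℂ) * Complex.I) := by
    ext
    rw [Units.val_mul]
    simp only [expUnit, Units.val_mk0]
    rw [← Complex.exp_add]
    have : ((Real.log (‖(z : ℂ)‖) : ℂ)) + (Complex.arg (z : ℂ) : ℂ) * Complex.I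
        = Complex.log (z : ℂ) := rfl
    rw [this, Complex.exp_log hz]
  calc (φ z : ℂ) = (φ (expUnit ((Real.log (‖(z : ℂ)‖) : ℂ))) : ℂ)
        * (φ (expUnit ((Complex.arg (z : ℂ) : ℂ) * Complex.I)) : ℂ) := by
        rw [← Units.val_mul, ← map_mul, ← hsplit]
    _ = Complex.exp (c₁ * Real.log (‖(z : ℂ)‖))
        * Complex.exp ((k : ℂ) * ((Complex.arg (z : ℂ) : ℂ) * Complex.I)) := by
        rw [hc₁ (Real.log (‖(z : ℂ)‖)), hc₂ (Complex.arg (z : ℂ)), hc₂k]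
        ring_nf

private lemma charForm_real_exp (a b : ℂ) (n : ℤ) (t : ℝ) :
    charForm a b n (Complex.exp (t : ℂ)) = Complex.exp ((a + b) * t) := by
  have h1 : Complex.exp (t : ℂ) = ((Real.exp t : ℝ) : ℂ) := (Complex.ofReal_exp t).symm
  have h2 : ((Real.exp t : ℝ) : ℂ) ≠ 0 := by exact_mod_cast (Real.exp_pos t).ne'
  rw [charForm, h1, Complex.norm_real, Real.norm_eq_abs, abs_of_pos (Real.exp_pos t), div_self h2, one_zpow,
    mul_one, Complex.cpow_def_of_ne_zero h2, ← Complex.ofReal_log (Real.exp_pos t).le,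
    Real.log_exp, mul_comm]

private lemma charForm_circle (a b : ℂ) (n : ℤ) (t : ℝ) :
    charForm a b n (Complex.exp ((t : ℂ) * Complex.I))
      = Complex.exp ((n : ℂ) * ((t : ℂ) * Complex.I)) := by
  rw [charForm, Complex.norm_exp_ofReal_mul_I]
  push_cast
  rw [Complex.one_cpow, div_one, one_mul, ← Complex.exp_int_mul]

private lemma exp_eq_cancel {x y : ℂ} (h : ∀ t : ℝ, Complex.exp (x * t) = Complex.exp (y * t)) :
    x = y := by
  have := lemZero (x - y) (fun t => by
    rw [sub_mul, Complex.exp_sub, h t, div_self (Complex.exp_ne_zero _)])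
  exact sub_eq_zero.mp this

private lemma charForm_ne_zero (a b : ℂ) (n : ℤ) (z : ℂ) (hz : z ≠ 0) :
    charForm a b n z ≠ 0 := by
  rw [charForm_eq_exp a b n z hz]
  exact mul_ne_zero (Complex.exp_ne_zero _) (Complex.exp_ne_zero _)

private lemma charForm_mul (a b : ℂ) (n : ℤ) (z w : ℂ) (hz : z ≠ 0) (hw : w ≠ 0) :
    charForm a b n (z * w) = charForm a b n z * charForm a b n w := by
  have hz' : ‖z‖ ≠ 0 := by simpa using hz
  have hw' : ‖w‖ ≠ 0 := by simpa using hw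
  have hzC : ((‖z‖ : ℝ) : ℂ) ≠ 0 := by exact_mod_cast hz'
  have hwC : ((‖w‖ : ℝ) : ℂ) ≠ 0 := by exact_mod_cast hw'
  rw [charForm, charForm, charForm, norm_mul, Complex.ofReal_mul,
    Complex.mul_cpow_ofReal_nonneg (norm_nonneg z) (norm_nonneg w)]
  have hbase : z * w / ((‖z‖ : ℂ) * (‖w‖ : ℂ))
      = (z / (‖z‖ : ℂ)) * (w / (‖w‖ : ℂ)) := by
    field_simp
  rw [hbase, mul_zpow]
  ring

private lemma charForm_continuous (a b : ℂ) (n : ℤ) :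
    Continuous fun z : ℂˣ => charForm a b n (z : ℂ) := by
  have heq : (fun z : ℂˣ => charForm a b n (z : ℂ))
      = fun z : ℂˣ => Complex.exp ((a + b) * (Real.log (‖(z : ℂ)‖) : ℂ))
          * ((z : ℂ) / ((‖(z : ℂ)‖ : ℝ) : ℂ)) ^ n := by
    funext z
    have hz : (z : ℂ) ≠ 0 := Units.ne_zero z
    have hzC : ((‖(z : ℂ)‖ : ℝ) : ℂ) ≠ 0 := by
      simpa using hz
    rw [charForm, Complex.cpow_def_of_ne_zero hzC,
      ← Complex.ofReal_log (norm_nonneg _), mul_comm (a + b)]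
  rw [heq]
  rw [continuous_iff_continuousAt]
  intro z
  have hz : (z : ℂ) ≠ 0 := Units.ne_zero z
  have habs : ‖(z : ℂ)‖ ≠ 0 := by simpa using hz
  have habsC : ((‖(z : ℂ)‖ : ℝ) : ℂ) ≠ 0 := by simpa using hz
  have habscont : ContinuousAt (fun z : ℂˣ => ‖(z : ℂ)‖) z :=
    (continuous_norm.comp Units.continuous_val).continuousAt
  have hlog : ContinuousAt (fun z : ℂˣ => Real.log (‖(z : ℂ)‖)) z :=
    ContinuousAt.comp (f := fun z : ℂˣ => ‖(z : ℂ)‖) (Real.continuousAt_log habs) habscont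
  have h1 : ContinuousAt (fun z : ℂˣ =>
      Complex.exp ((a + b) * (Real.log (‖(z : ℂ)‖) : ℂ))) z :=
    (continuousAt_const.mul (ContinuousAt.comp (f := fun z : ℂˣ => Real.log (‖(z : ℂ)‖)) Complex.continuous_ofReal.continuousAt hlog)).cexp
  have hdiv : ContinuousAt (fun z : ℂˣ => (z : ℂ) / ((‖(z : ℂ)‖ : ℝ) : ℂ)) z :=
    (Units.continuous_val.continuousAt).div
      (ContinuousAt.comp (f := fun z : ℂˣ => ‖(z : ℂ)‖) Complex.continuous_ofReal.continuousAt habscont) habsC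
  have h2 : ContinuousAt (fun z : ℂˣ => ((z : ℂ) / ((‖(z : ℂ)‖ : ℝ) : ℂ)) ^ n) z :=
    hdiv.zpow₀ n (Or.inl (div_ne_zero hz habsC))
  exact h1.mul h2

/-- Every continuous group homomorphism `ℂˣ → ℂˣ` is of the form
`z ↦ |z|^(a+b) (z/|z|)^(a-b)` for unique `a b : ℂ` with `a - b ∈ ℤ`, and
conversely every such formula defines a continuous group homomorphism. -/
theorem continuous_units_complex_hom_classification :
    (∀ φ : ℂˣ →* ℂˣ, Continuous (fun z : ℂˣ => (φ z : ℂ)) →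
      ∃! ab : ℂ × ℂ, ∃ n : ℤ, ab.1 - ab.2 = (n : ℂ) ∧
        ∀ z : ℂˣ, (φ z : ℂ) = charForm ab.1 ab.2 n (z : ℂ)) ∧
    (∀ (a b : ℂ) (n : ℤ), a - b = (n : ℂ) →
      ∃ φ : ℂˣ →* ℂˣ, Continuous (fun z : ℂˣ => (φ z : ℂ)) ∧
        ∀ z : ℂˣ, (φ z : ℂ) = charForm a b n (z : ℂ)) := by
  constructor
  · intro φ hφ
    obtain ⟨c₁, n, hrep⟩ := exists_rep φ hφ
    have hmain : ∀ z : ℂˣ, (φ z : ℂ) = charForm ((c₁ + n) / 2) ((c₁ - n) / 2) n (z : ℂ) := by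
      intro z
      have hz : (z : ℂ) ≠ 0 := Units.ne_zero z
      rw [hrep z, charForm_eq_exp _ _ _ _ hz]
      ring_nf
    refine ⟨((c₁ + n) / 2, (c₁ - n) / 2), ⟨n, by push_cast; ring, hmain⟩, ?_⟩
    rintro ⟨a', b'⟩ ⟨n', hn', hrep'⟩
    have hAB : ∀ z : ℂˣ, charForm a' b' n' (z : ℂ)
        = charForm ((c₁ + n) / 2) ((c₁ - n) / 2) n (z : ℂ) :=
      fun z => (hrep' z).symm.trans (hmain z)
    have hval : ∀ t : ℝ, ((expUnit ((t : ℂ)) : ℂˣ) : ℂ) = Complex.exp (t : ℂ) := fun t => rfl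
    have hvalI : ∀ t : ℝ, ((expUnit ((t : ℂ) * Complex.I) : ℂˣ) : ℂ)
        = Complex.exp ((t : ℂ) * Complex.I) := fun t => rfl
    have hsum : a' + b' = c₁ := by
      have := exp_eq_cancel (x := a' + b') (y := (c₁ + n) / 2 + (c₁ - n) / 2) ?_
      · rw [this]; ring
      · intro t
        have h1 := hAB (expUnit ((t : ℂ)))
        rw [hval t] at h1
        rw [charForm_real_exp, charForm_real_exp] at h1
        exact h1
    have hnn : (n' : ℂ) = (n : ℂ) := by
      have hI : (n' : ℂ) * Complex.I = (n : ℂ) * Complex.I := by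
        apply exp_eq_cancel
        intro t
        have h1 := hAB (expUnit ((t : ℂ) * Complex.I))
        rw [hvalI t] at h1
        rw [charForm_circle, charForm_circle] at h1
        calc Complex.exp ((n' : ℂ) * Complex.I * t)
            = Complex.exp ((n' : ℂ) * ((t : ℂ) * Complex.I)) := by ring_nf
          _ = Complex.exp ((n : ℂ) * ((t : ℂ) * Complex.I)) := h1
          _ = Complex.exp ((n : ℂ) * Complex.I * t) := by ring_nf
      exact mul_right_cancel₀ Complex.I_ne_zero hI
    have hdiff : a' - b' = (n : ℂ) := by rw [hn', hnn]
    have ha : a' = (c₁ + n) / 2 := by linear_combination (hsum + hdiff) / 2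
    have hb : b' = (c₁ - n) / 2 := by linear_combination (hsum - hdiff) / 2
    simp [ha, hb]
  · intro a b n _
    refine ⟨MonoidHom.mk' (fun z => Units.mk0 (charForm a b n (z : ℂ))
      (charForm_ne_zero a b n _ (Units.ne_zero z))) ?_, ?_, ?_⟩
    · intro z w
      ext
      simp only [Units.val_mul, Units.val_mk0]
      exact charForm_mul a b n (z : ℂ) (w : ℂ) (Units.ne_zero z) (Units.ne_zero w)
    · exact charForm_continuous a b n
    · intro z; rfl
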